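/- Let q, q̃ ∈ L¹(ℝ) with ‖q‖_{L¹} ≤ α and ‖q̃‖_{L¹} ≤ α for some α > 0, let λ ∈ ℂ with Im λ ≥ 0 and λ ≠ 0, and let m and m̃ be bounded measurable functions on ℝ satisfying the Jost integral equations for q and q̃ respectively (with the same λ). Then sup_{x∈ℝ} |m(x) − m̃(x)| ≤ exp(2α/|λ|) · ‖q − q̃‖_{L¹}/|λ|. -/

import Mathlib

open MeasureTheory

noncomputable def Iv (k : ℝ → ℝ) (t : ℝ) : ℝ := ∫ s in Set.Ioi t, k s

variable {k : ℝ → ℝ}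

lemma Iv_nonneg (hk0 : ∀ t, 0 ≤ k t) (t : ℝ) : 0 ≤ Iv k t :=
  setIntegral_nonneg measurableSet_Ioi fun s _ => hk0 s

lemma Iv_anti (hk : Integrable k) (hk0 : ∀ t, 0 ≤ k t) : Antitone (Iv k) := by
  intro s t hst
  exact setIntegral_mono_set hk.integrableOn
    (Filter.Eventually.of_forall fun x => hk0 x)
    (HasSubset.Subset.eventuallyLE (Set.Ioi_subset_Ioi hst))

lemma Iv_le (hk : Integrable k) (hk0 : ∀ t, 0 ≤ k t) (t : ℝ) : Iv k t ≤ ∫ s, k s :=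
  setIntegral_le_integral hk (Filter.Eventually.of_forall fun x => hk0 x)

lemma Iv_add (hk : Integrable k) {a b : ℝ} (hab : a ≤ b) :
    Iv k a = (∫ s in Set.Ioc a b, k s) + Iv k b := by
  rw [Iv, ← Set.Ioc_union_Ioi_eq_Ioi hab,
    setIntegral_union (Set.Ioc_disjoint_Ioi le_rfl) measurableSet_Ioi
      hk.integrableOn hk.integrableOn]
  rfl

lemma Iv_continuous (hk : Integrable k) : Continuous (Iv k) := by
  have h : ∀ t, Iv k t = Iv k 0 - ∫ s in (0:ℝ)..t, k s := by
    intro t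
    rcases le_total 0 t with h0 | h0
    · rw [intervalIntegral.integral_of_le h0, Iv_add hk h0]; ring
    · rw [intervalIntegral.integral_of_ge h0, Iv_add hk h0]; ring
  have : Continuous fun t => Iv k 0 - ∫ s in (0:ℝ)..t, k s :=
    continuous_const.sub (hk.continuous_primitive 0)
  simpa [← funext h] using this

lemma Iv_small (hk : Integrable k) (hk0 : ∀ t, 0 ≤ k t) {y : ℝ} (hy : 0 < y) :
    ∃ B : ℝ, Iv k B < y := by
  have hIic : Filter.Tendsto (fun n : ℕ => ∫ s in Set.Iic (n : ℝ), k s) Filter.atTop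
      (nhds (∫ s in ⋃ n : ℕ, Set.Iic (n : ℝ), k s)) :=
    tendsto_setIntegral_of_monotone (fun _ => measurableSet_Iic)
      (fun i j hij => Set.Iic_subset_Iic.2 (by exact_mod_cast hij)) hk.integrableOn
  have hU : (⋃ n : ℕ, Set.Iic (n : ℝ)) = Set.univ := by
    ext x; simp only [Set.mem_iUnion, Set.mem_Iic, Set.mem_univ, iff_true]
    exact exists_nat_ge x
  rw [hU] at hIic
  have hIoi : ∀ n : ℕ, Iv k n = (∫ s in Set.univ, k s) - ∫ s in Set.Iic (n : ℝ), k s := by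
    intro n
    have : (∫ s in Set.univ, k s) = (∫ s in Set.Iic (n:ℝ), k s) + Iv k n := by
      rw [← Set.Iic_union_Ioi (a := (n:ℝ)),
        setIntegral_union (Set.Iic_disjoint_Ioi le_rfl) measurableSet_Ioi
          hk.integrableOn hk.integrableOn]
      rfl
    linarith
  have : Filter.Tendsto (fun n : ℕ => Iv k n) Filter.atTop (nhds 0) := by
    simp only [hIoi]
    simpa using (tendsto_const_nhds (x := ∫ s in Set.univ, k s)).sub hIic
  rcases ((this.eventually (eventually_lt_nhds hy)).exists) with ⟨n, hn⟩
  exact ⟨n, hn⟩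

lemma intg (hk : Integrable k) (hk0 : ∀ t, 0 ≤ k t) :
    Integrable (fun t => Real.exp (Iv k t) * k t) := by
  refine hk.bdd_mul (c := Real.exp (∫ s, k s)) ?_ (Filter.Eventually.of_forall fun t => ?_)
  · exact (Real.continuous_exp.comp (Iv_continuous hk)).aestronglyMeasurable
  · rw [Real.norm_eq_abs, abs_of_pos (Real.exp_pos _)]
    exact Real.exp_le_exp.2 (Iv_le hk hk0 t)

lemma small_piece (hk : Integrable k) (hk0 : ∀ t, 0 ≤ k t) (a : ℝ) :
    ∫ t in Set.Ioi a, Real.exp (Iv k t) * k t ≤ Real.exp (Iv k a) * Iv k a := by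
  have h1 : ∫ t in Set.Ioi a, Real.exp (Iv k t) * k t
      ≤ ∫ t in Set.Ioi a, Real.exp (Iv k a) * k t := by
    refine setIntegral_mono_on (intg hk hk0).integrableOn
      (hk.integrableOn.const_mul _) measurableSet_Ioi fun t ht => ?_
    exact mul_le_mul_of_nonneg_right
      (Real.exp_le_exp.2 (Iv_anti hk hk0 (le_of_lt ht))) (hk0 t)
  calc _ ≤ _ := h1
    _ = Real.exp (Iv k a) * Iv k a := by rw [integral_const_mul]; rfl

lemma keyA (hk : Integrable k) (hk0 : ∀ t, 0 ≤ k t) {δ : ℝ} (hδ : 0 ≤ δ) :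
    ∀ n : ℕ, ∀ a : ℝ, Iv k a ≤ n * δ →
      ∫ t in Set.Ioi a, Real.exp (Iv k t) * k t
        ≤ Real.exp δ * (Real.exp (Iv k a) - 1) + Real.exp δ * δ := by
  intro n
  induction n with
  | zero =>
    intro a ha
    have ha0 : Iv k a = 0 := le_antisymm (by simpa using ha) (Iv_nonneg hk0 a)
    have := small_piece hk hk0 a
    rw [ha0] at this ⊢
    simp only [Real.exp_zero, one_mul, mul_zero] at this
    have : ∫ t in Set.Ioi a, Real.exp (Iv k t) * k t ≤ 0 := this
    have h2 : 0 ≤ Real.exp δ * δ := mul_nonneg (Real.exp_pos _).le hδ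
    simp only [Real.exp_zero, sub_self, mul_zero, zero_add]
    linarith
  | succ n ih =>
    intro a ha
    by_cases hsmall : Iv k a ≤ δ
    · calc ∫ t in Set.Ioi a, Real.exp (Iv k t) * k t
          ≤ Real.exp (Iv k a) * Iv k a := small_piece hk hk0 a
        _ ≤ Real.exp δ * δ := by
            refine mul_le_mul (Real.exp_le_exp.2 hsmall) hsmall (Iv_nonneg hk0 a)
              (Real.exp_pos _).le
        _ ≤ _ := by
            have h1 : (1:ℝ) ≤ Real.exp (Iv k a) := Real.one_le_exp (Iv_nonneg hk0 a)
            nlinarith [Real.exp_pos δ]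
    · push_neg at hsmall
      have hy : 0 < Iv k a - δ ∨ Iv k a - δ = 0 := by
        rcases lt_or_eq_of_le (sub_nonneg.2 hsmall.le) with h | h
        · exact Or.inl h
        · exact Or.inr h.symm
      -- find b with Iv k b = Iv k a - δ
      have hyn : 0 ≤ Iv k a - δ := sub_nonneg.2 hsmall.le
      obtain ⟨b, hab, hIb⟩ : ∃ b, a ≤ b ∧ Iv k b = Iv k a - δ := by
        rcases eq_or_lt_of_le hyn with h0 | h0
        · -- Iv k a = δ : contradiction with hsmall
          exact absurd hsmall.ne' (by linarith)
        · obtain ⟨B0, hB0⟩ := Iv_small hk hk0 h0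
          refine ?_
          set B := max a B0 with hB
          have hIB : Iv k B < Iv k a - δ :=
            lt_of_le_of_lt (Iv_anti hk hk0 (le_max_right a B0)) hB0
          have haB : a ≤ B := le_max_left a B0
          have := intermediate_value_Icc' haB ((Iv_continuous hk).continuousOn)
          have hmem : Iv k a - δ ∈ Set.Icc (Iv k B) (Iv k a) := ⟨hIB.le, by linarith⟩
          obtain ⟨b, hbmem, hb⟩ := this hmem
          exact ⟨b, hbmem.1, hb⟩
      have hsplit : ∫ t in Set.Ioi a, Real.exp (Iv k t) * k t
          = (∫ t in Set.Ioc a b, Real.exp (Iv k t) * k t)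
            + ∫ t in Set.Ioi b, Real.exp (Iv k t) * k t := by
        rw [← Set.Ioc_union_Ioi_eq_Ioi hab,
          setIntegral_union (Set.Ioc_disjoint_Ioi le_rfl) measurableSet_Ioi
            (intg hk hk0).integrableOn (intg hk hk0).integrableOn]
      have hIoc : ∫ t in Set.Ioc a b, Real.exp (Iv k t) * k t ≤ Real.exp (Iv k a) * δ := by
        have h1 : ∫ t in Set.Ioc a b, Real.exp (Iv k t) * k t
            ≤ ∫ t in Set.Ioc a b, Real.exp (Iv k a) * k t := by
          refine setIntegral_mono_on (intg hk hk0).integrableOn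
            (hk.integrableOn.const_mul _) measurableSet_Ioc fun t ht => ?_
          exact mul_le_mul_of_nonneg_right
            (Real.exp_le_exp.2 (Iv_anti hk hk0 ht.1.le)) (hk0 t)
        have h2 : (∫ t in Set.Ioc a b, k t) = δ := by
          have := Iv_add hk hab
          rw [hIb] at this; linarith
        calc _ ≤ _ := h1
          _ = Real.exp (Iv k a) * δ := by rw [integral_const_mul, h2]
      have hIH : ∫ t in Set.Ioi b, Real.exp (Iv k t) * k t
          ≤ Real.exp δ * (Real.exp (Iv k b) - 1) + Real.exp δ * δ := by
        refine ih b ?_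
        rw [hIb]
        push_cast at ha ⊢
        linarith
      rw [hsplit]
      have hexpIb : Real.exp (Iv k b) = Real.exp (Iv k a) / Real.exp δ := by
        rw [hIb, Real.exp_sub]
      have key : Real.exp (Iv k a) * δ + Real.exp (Iv k a) ≤ Real.exp δ * Real.exp (Iv k a) := by
        have h1 : δ + 1 ≤ Real.exp δ := Real.add_one_le_exp δ
        nlinarith [Real.exp_pos (Iv k a)]
      have hIa : Real.exp δ * Real.exp (Iv k b) = Real.exp (Iv k a) := by
        rw [← Real.exp_add, hIb]; ring_nf
      nlinarith [hIoc, hIH]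

lemma key (hk : Integrable k) (hk0 : ∀ t, 0 ≤ k t) (x : ℝ) :
    ∫ t in Set.Ioi x, Real.exp (Iv k t) * k t ≤ Real.exp (Iv k x) - 1 := by
  have hIx : 0 ≤ Iv k x := Iv_nonneg hk0 x
  have hlim : Filter.Tendsto
      (fun N : ℕ => Real.exp (Iv k x / N) * (Real.exp (Iv k x) - 1)
        + Real.exp (Iv k x / N) * (Iv k x / N)) Filter.atTop
      (nhds (Real.exp (Iv k x) - 1)) := by
    have hd : Filter.Tendsto (fun N : ℕ => Iv k x / N) Filter.atTop (nhds 0) :=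
      tendsto_const_div_atTop_nhds_zero_nat _
    have hc : Continuous fun d : ℝ => Real.exp d * (Real.exp (Iv k x) - 1) + Real.exp d * d := by
      continuity
    have := (hc.tendsto 0).comp hd
    simpa [Function.comp_def] using this
  refine ge_of_tendsto hlim ?_
  filter_upwards [Filter.eventually_ge_atTop 1] with N hN
  have hNpos : (0:ℝ) < N := by exact_mod_cast hN
  refine keyA hk hk0 (div_nonneg hIx hNpos.le) N x ?_
  rw [mul_div_cancel₀ _ hNpos.ne']

lemma gronwall (hk : Integrable k) (hk0 : ∀ t, 0 ≤ k t)
    (u : ℝ → ℝ) (hu : Integrable (fun t => k t * u t)) (hu0 : ∀ x, 0 ≤ u x)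
    (C : ℝ) (huC : ∀ x, u x ≤ C)
    (a : ℝ) (ha : 0 ≤ a) (h : ∀ x, u x ≤ a + ∫ t in Set.Ioi x, k t * u t) :
    ∀ x, u x ≤ a * Real.exp (Iv k x) := by
  set L := ∫ s, k s with hL
  have hL0 : 0 ≤ L := integral_nonneg hk0
  set r := 1 - Real.exp (-L) with hr
  have hr0 : 0 ≤ r := by
    have : Real.exp (-L) ≤ 1 := Real.exp_le_one_iff.2 (by linarith)
    linarith
  have hr1 : r < 1 := by
    have : 0 < Real.exp (-L) := Real.exp_pos _
    simp only [hr]; linarith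
  have hC0 : 0 ≤ C := le_trans (hu0 0) (huC 0)
  have claim : ∀ n : ℕ, ∀ x, u x ≤ (a + C * r ^ n) * Real.exp (Iv k x) := by
    intro n
    induction n with
    | zero =>
      intro x
      have h1 : (1:ℝ) ≤ Real.exp (Iv k x) := Real.one_le_exp (Iv_nonneg hk0 x)
      calc u x ≤ C := huC x
        _ ≤ (a + C * r ^ 0) * 1 := by simp; linarith
        _ ≤ (a + C * r ^ 0) * Real.exp (Iv k x) := by
            apply mul_le_mul_of_nonneg_left h1; positivity
    | succ n ih =>
      intro x
      set c := C * r ^ n with hc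
      have hc0 : 0 ≤ c := by positivity
      have hstep : ∫ t in Set.Ioi x, k t * u t
          ≤ (a + c) * (Real.exp (Iv k x) - 1) := by
        have h1 : ∫ t in Set.Ioi x, k t * u t
            ≤ ∫ t in Set.Ioi x, (a + c) * (Real.exp (Iv k t) * k t) := by
          refine setIntegral_mono_on hu.integrableOn
            (((intg hk hk0).const_mul _).integrableOn) measurableSet_Ioi fun t _ => ?_
          calc k t * u t ≤ k t * ((a + c) * Real.exp (Iv k t)) :=
                mul_le_mul_of_nonneg_left (ih t) (hk0 t)
            _ = (a + c) * (Real.exp (Iv k t) * k t) := by ring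
        calc _ ≤ _ := h1
          _ = (a + c) * ∫ t in Set.Ioi x, Real.exp (Iv k t) * k t := integral_const_mul _ _
          _ ≤ (a + c) * (Real.exp (Iv k x) - 1) := by
              apply mul_le_mul_of_nonneg_left (key hk hk0 x) (by linarith)
      have hE : Real.exp (Iv k x) ≤ Real.exp L := Real.exp_le_exp.2 (Iv_le hk hk0 x)
      have hE1 : (1:ℝ) ≤ Real.exp (Iv k x) := Real.one_le_exp (Iv_nonneg hk0 x)
      have hfin : a + (a + c) * (Real.exp (Iv k x) - 1)
          ≤ (a + C * r ^ (n + 1)) * Real.exp (Iv k x) := by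
        have hrc : c * Real.exp (-L) * Real.exp (Iv k x) ≤ c := by
          have h2 : Real.exp (-L) * Real.exp (Iv k x) ≤ 1 := by
            rw [← Real.exp_add]
            apply Real.exp_le_one_iff.2
            have := Iv_le hk hk0 x; linarith
          nlinarith
        have hr' : C * r ^ (n+1) = c * r := by rw [hc]; ring
        rw [hr']
        have : c - c * r = c * Real.exp (-L) := by rw [hr]; ring
        nlinarith
      calc u x ≤ a + ∫ t in Set.Ioi x, k t * u t := h x
        _ ≤ a + (a + c) * (Real.exp (Iv k x) - 1) := by linarith
        _ ≤ _ := hfin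
  intro x
  have hlim : Filter.Tendsto (fun n : ℕ => (a + C * r ^ n) * Real.exp (Iv k x))
      Filter.atTop (nhds (a * Real.exp (Iv k x))) := by
    have hrn : Filter.Tendsto (fun n : ℕ => r ^ n) Filter.atTop (nhds 0) :=
      tendsto_pow_atTop_nhds_zero_of_lt_one hr0 hr1
    have := ((hrn.const_mul C).const_add a).mul_const (Real.exp (Iv k x))
    simpa using this
  exact ge_of_tendsto hlim (Filter.Eventually.of_forall fun n => claim n x)

/-- The kernel `D(y,λ) = (e^{2iλy} - 1)/(2iλ)` for `y > 0`, extended by `0`. -/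
noncomputable def D (lam : ℂ) (y : ℝ) : ℂ :=
  if 0 < y then (Complex.exp (2 * Complex.I * lam * y) - 1) / (2 * Complex.I * lam) else 0

lemma D_bd {lam : ℂ} (him : 0 ≤ lam.im) (hne : lam ≠ 0) (y : ℝ) :
    ‖D lam y‖ ≤ 1 / ‖lam‖ := by
  have hA : 0 < ‖lam‖ := norm_pos_iff.mpr hne
  unfold D
  split_ifs with hy
  · rw [norm_div]
    have hden : ‖(2 * Complex.I * lam)‖ = 2 * ‖lam‖ := by
      simp
    have hre : (2 * Complex.I * lam * (y : ℂ)).re = -(2 * lam.im * y) := by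
      simp [Complex.mul_re, Complex.mul_im]
    have hnum : ‖(Complex.exp (2 * Complex.I * lam * y) - 1)‖ ≤ 2 := by
      calc ‖(Complex.exp (2 * Complex.I * lam * y) - 1)‖
          ≤ ‖(Complex.exp (2 * Complex.I * lam * y))‖ + ‖(1:ℂ)‖ :=
            (norm_sub_le _ _)
        _ ≤ 1 + 1 := by
            rw [Complex.norm_exp, hre, norm_one]
            have : Real.exp (-(2 * lam.im * y)) ≤ 1 :=
              Real.exp_le_one_iff.2 (by nlinarith)
            linarith
        _ = 2 := by norm_num
    rw [hden]
    rw [div_le_div_iff₀ (by positivity) hA]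
    nlinarith
  · simp only [norm_zero]
    positivity

lemma D_meas (lam : ℂ) (x : ℝ) : Measurable fun t : ℝ => D lam (t - x) := by
  have h1 : Measurable (D lam) := by
    unfold D
    refine Measurable.ite (measurableSet_lt measurable_const measurable_id) ?_ measurable_const
    exact (((Complex.continuous_exp.comp
      ((continuous_const.mul Complex.continuous_ofReal))).sub continuous_const).div_const
        _).measurable
  exact h1.comp (measurable_id.sub_const x)

set_option maxHeartbeats 2000000 in
theorem jost_solution_lipschitz (q qt : ℝ → ℂ) (hq : Integrable q) (hqt : Integrable qt)
    (α : ℝ) (hα : 0 < α) (hqa : (∫ t, ‖q t‖) ≤ α) (hqta : (∫ t, ‖qt t‖) ≤ α)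
    (lam : ℂ) (him : 0 ≤ lam.im) (hne : lam ≠ 0)
    (m mt : ℝ → ℂ) (hmeas : Measurable m) (hmeast : Measurable mt)
    (hbd : ∃ C, ∀ x, ‖m x‖ ≤ C) (hbdt : ∃ C, ∀ x, ‖mt x‖ ≤ C)
    (heq : ∀ x, m x = 1 + ∫ t in Set.Ioi x, D lam (t - x) * q t * m t)
    (heqt : ∀ x, mt x = 1 + ∫ t in Set.Ioi x, D lam (t - x) * qt t * mt t) :
    ∀ x, ‖m x - mt x‖ ≤ Real.exp (2 * α / ‖lam‖) *
      ((∫ t, ‖q t - qt t‖) / ‖lam‖) := by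
  obtain ⟨Cm, hCm⟩ := hbd
  obtain ⟨Ct, hCt⟩ := hbdt
  set A := ‖lam‖ with hA'
  have hA : 0 < A := norm_pos_iff.mpr hne
  set kq : ℝ → ℝ := fun t => ‖q t‖ / A with hkq
  set kqt : ℝ → ℝ := fun t => ‖qt t‖ / A with hkqt
  have hkq_int : Integrable kq := hq.norm.div_const A
  have hkqt_int : Integrable kqt := hqt.norm.div_const A
  have hkq0 : ∀ t, 0 ≤ kq t := fun t => div_nonneg (norm_nonneg _) hA.le
  have hkqt0 : ∀ t, 0 ≤ kqt t := fun t => div_nonneg (norm_nonneg _) hA.le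
  have hLq : (∫ s, kq s) ≤ α / A := by
    rw [hkq]
    rw [integral_div]
    gcongr
  have hLqt : (∫ s, kqt s) ≤ α / A := by
    rw [hkqt]
    rw [integral_div]
    gcongr
  have hDm : ∀ x : ℝ, Measurable fun t => D lam (t - x) := D_meas lam
  have hInt_qt : ∀ x : ℝ, Integrable fun t => D lam (t - x) * qt t * mt t := by
    intro x
    have h1 : Integrable fun t => (D lam (t - x) * mt t) * qt t :=
      hqt.bdd_mul (c := 1 / A * Ct) (((hDm x).mul hmeast).aestronglyMeasurable)
        (Filter.Eventually.of_forall fun t => by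
          rw [norm_mul]
          have h0 : (0:ℝ) ≤ Ct := le_trans (norm_nonneg _) (hCt 0)
          exact mul_le_mul (D_bd him hne _) (hCt t) (norm_nonneg _) (by positivity))
    have he : (fun t => D lam (t - x) * qt t * mt t)
        = fun t => (D lam (t - x) * mt t) * qt t := by funext t; ring
    rwa [he]
  have hInt_q : ∀ x : ℝ, Integrable fun t => D lam (t - x) * q t * m t := by
    intro x
    have h1 : Integrable fun t => (D lam (t - x) * m t) * q t :=
      hq.bdd_mul (c := 1 / A * Cm) (((hDm x).mul hmeas).aestronglyMeasurable)
        (Filter.Eventually.of_forall fun t => by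
          rw [norm_mul]
          have h0 : (0:ℝ) ≤ Cm := le_trans (norm_nonneg _) (hCm 0)
          exact mul_le_mul (D_bd him hne _) (hCm t) (norm_nonneg _) (by positivity))
    have he : (fun t => D lam (t - x) * q t * m t)
        = fun t => (D lam (t - x) * m t) * q t := by funext t; ring
    rwa [he]
  have hmtk_int : Integrable fun t => kqt t * ‖mt t‖ := by
    have h1 : Integrable fun t => (‖mt t‖ * A⁻¹) * ‖qt t‖ :=
      hqt.norm.bdd_mul (c := Ct * A⁻¹) ((hmeast.norm.mul_const _).aestronglyMeasurable)
        (Filter.Eventually.of_forall fun t => by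
          rw [Real.norm_eq_abs, abs_of_nonneg (by positivity)]
          exact mul_le_mul_of_nonneg_right (hCt t) (by positivity))
    have he : (fun t => kqt t * ‖mt t‖) = fun t => (‖mt t‖ * A⁻¹) * ‖qt t‖ := by
      funext t; simp only [hkqt]; ring
    rwa [he]
  have hmt_ineq : ∀ x, ‖mt x‖ ≤ 1 + ∫ t in Set.Ioi x, kqt t * ‖mt t‖ := by
    intro x
    rw [heqt x]
    refine (norm_add_le _ _).trans ?_
    rw [norm_one]
    gcongr
    refine norm_integral_le_of_norm_le hmtk_int.integrableOn
      (Filter.Eventually.of_forall fun t => ?_)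
    calc ‖D lam (t - x) * qt t * mt t‖ = ‖D lam (t - x)‖ * ‖qt t‖ * ‖mt t‖ := by
          rw [norm_mul, norm_mul]
      _ ≤ 1 / A * ‖qt t‖ * ‖mt t‖ := by
          gcongr
          exact D_bd him hne _
      _ = kqt t * ‖mt t‖ := by simp only [hkqt]; ring
  set MB := Real.exp (α / A) with hMB
  have hmtB : ∀ x, ‖mt x‖ ≤ MB := by
    intro x
    have := gronwall hkqt_int hkqt0 (fun t => ‖mt t‖) hmtk_int (fun t => norm_nonneg _)
      Ct hCt 1 zero_le_one hmt_ineq x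
    rw [one_mul] at this
    exact this.trans (Real.exp_le_exp.2 ((Iv_le hkqt_int hkqt0 x).trans hLqt))
  have hMB0 : 0 < MB := Real.exp_pos _
  set u : ℝ → ℝ := fun t => ‖m t - mt t‖ with hu
  have hu0 : ∀ t, 0 ≤ u t := fun t => norm_nonneg _
  have huC : ∀ t, u t ≤ Cm + Ct := fun t =>
    (norm_sub_le _ _).trans (add_le_add (hCm t) (hCt t))
  have hku_int : Integrable fun t => kq t * u t := by
    have h1 : Integrable fun t => (u t * A⁻¹) * ‖q t‖ :=
      hq.norm.bdd_mul (c := (Cm + Ct) * A⁻¹) (((hmeas.sub hmeast).norm.mul_const _).aestronglyMeasurable)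
        (Filter.Eventually.of_forall fun t => by
          rw [Real.norm_eq_abs, abs_of_nonneg (by positivity)]
          exact mul_le_mul_of_nonneg_right (huC t) (by positivity))
    have he : (fun t => kq t * u t) = fun t => (u t * A⁻¹) * ‖q t‖ := by
      funext t; simp only [hkq, hu]; ring
    rwa [he]
  have hqq_int : Integrable fun t => ‖q t - qt t‖ := (hq.sub hqt).norm
  have hqq0 : 0 ≤ ∫ t, ‖q t - qt t‖ := integral_nonneg fun t => norm_nonneg _
  set a0 : ℝ := MB * ((∫ t, ‖q t - qt t‖) / A) with ha0def
  have ha0 : 0 ≤ a0 := by positivity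
  have hbound_int : Integrable fun t => MB / A * ‖q t - qt t‖ + kq t * u t :=
    (hqq_int.const_mul _).add hku_int
  have hu_ineq : ∀ x, u x ≤ a0 + ∫ t in Set.Ioi x, kq t * u t := by
    intro x
    have hdiff : m x - mt x = ∫ t in Set.Ioi x,
        (D lam (t - x) * q t * m t - D lam (t - x) * qt t * mt t) := by
      rw [heq x, heqt x,
        integral_sub (hInt_q x).integrableOn (hInt_qt x).integrableOn]
      ring
    have h1 : u x ≤ ∫ t in Set.Ioi x, (MB / A * ‖q t - qt t‖ + kq t * u t) := by
      have hux : u x = ‖m x - mt x‖ := rfl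
      rw [hux, hdiff]
      refine norm_integral_le_of_norm_le hbound_int.integrableOn
        (Filter.Eventually.of_forall fun t => ?_)
      have hsplit : D lam (t - x) * q t * m t - D lam (t - x) * qt t * mt t
          = D lam (t - x) * (q t - qt t) * mt t + D lam (t - x) * q t * (m t - mt t) := by
        ring
      rw [hsplit]
      refine (norm_add_le _ _).trans (add_le_add ?_ ?_)
      · calc ‖D lam (t - x) * (q t - qt t) * mt t‖
            = ‖D lam (t - x)‖ * ‖q t - qt t‖ * ‖mt t‖ := by rw [norm_mul, norm_mul]
          _ ≤ 1 / A * ‖q t - qt t‖ * MB := by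
              gcongr
              · exact D_bd him hne _
              · exact hmtB t
          _ = MB / A * ‖q t - qt t‖ := by ring
      · calc ‖D lam (t - x) * q t * (m t - mt t)‖
            = ‖D lam (t - x)‖ * ‖q t‖ * ‖m t - mt t‖ := by rw [norm_mul, norm_mul]
          _ ≤ 1 / A * ‖q t‖ * ‖m t - mt t‖ := by
              gcongr
              exact D_bd him hne _
          _ = kq t * u t := by simp only [hkq, hu]; ring
    have h2 : ∫ t in Set.Ioi x, (MB / A * ‖q t - qt t‖ + kq t * u t)
        = MB / A * (∫ t in Set.Ioi x, ‖q t - qt t‖) + ∫ t in Set.Ioi x, kq t * u t := by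
      rw [integral_add ((hqq_int.const_mul _).integrableOn) hku_int.integrableOn,
        integral_const_mul]
    have h3 : MB / A * (∫ t in Set.Ioi x, ‖q t - qt t‖) ≤ a0 := by
      have := setIntegral_le_integral hqq_int
        (Filter.Eventually.of_forall fun t => norm_nonneg _) (s := Set.Ioi x)
      calc MB / A * (∫ t in Set.Ioi x, ‖q t - qt t‖)
          ≤ MB / A * ∫ t, ‖q t - qt t‖ := by gcongr
        _ = a0 := by rw [ha0def]; ring
    linarith [h1, h2 ▸ h1]
  intro x
  have hmain := gronwall hkq_int hkq0 u hku_int hu0 (Cm + Ct) huC a0 ha0 hu_ineq x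
  have h4 : a0 * Real.exp (Iv kq x) ≤ a0 * MB := by
    gcongr
    exact Real.exp_le_exp.2 ((Iv_le hkq_int hkq0 x).trans hLq)
  have h5 : a0 * MB = Real.exp (2 * α / A) * ((∫ t, ‖q t - qt t‖) / A) := by
    rw [ha0def, hMB, show 2 * α / A = α / A + α / A by ring, Real.exp_add]
    ring
  calc u x ≤ a0 * Real.exp (Iv kq x) := hmain
    _ ≤ a0 * MB := h4
    _ = _ := h5
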